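/- If a curve of constant curvature κ₀ > 0 and nonvanishing torsion τ lies on a circular cylinder of radius ρ, then its torsion satisfies |τ(s)| ≤ 3/(2ρ) for all s, unless the curve is a circular helix. -/

import Mathlib

open RealInnerProductSpace

lemma parseval3 (t n b : EuclideanSpace ℝ (Fin 3))
    (htu : ‖t‖ = 1) (hnu : ‖n‖ = 1) (hbu : ‖b‖ = 1)
    (htn : ⟪t, n⟫ = 0) (htb : ⟪t, b⟫ = 0) (hnb : ⟪n, b⟫ = 0)
    (x y : EuclideanSpace ℝ (Fin 3)) :
    ⟪x, y⟫ = ⟪x, t⟫ * ⟪t, y⟫ + ⟪x, n⟫ * ⟪n, y⟫ + ⟪x, b⟫ * ⟪b, y⟫ := by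
  have hv : Orthonormal ℝ ![t, n, b] := by
    rw [orthonormal_iff_ite]
    intro i j
    have htt : ⟪t, t⟫ = 1 := by rw [real_inner_self_eq_norm_sq, htu]; norm_num
    have hnn : ⟪n, n⟫ = 1 := by rw [real_inner_self_eq_norm_sq, hnu]; norm_num
    have hbb : ⟪b, b⟫ = 1 := by rw [real_inner_self_eq_norm_sq, hbu]; norm_num
    have hnt : ⟪n, t⟫ = 0 := by rw [real_inner_comm]; exact htn
    have hbt : ⟪b, t⟫ = 0 := by rw [real_inner_comm]; exact htb
    have hbn : ⟪b, n⟫ = 0 := by rw [real_inner_comm]; exact hnb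
    fin_cases i <;> fin_cases j <;>
      simp only [Matrix.cons_val_zero, Matrix.cons_val_one, Matrix.head_cons,
        Matrix.cons_val_two, Matrix.tail_cons] <;>
      simp [Fin.ext_iff, htu, hnu, hbu, htt, hnn, hbb, htn, htb, hnb, hnt, hbt, hbn]
  have hcard : Fintype.card (Fin 3) = Module.finrank ℝ (EuclideanSpace ℝ (Fin 3)) := by
    simp [finrank_euclideanSpace]
  let B : OrthonormalBasis (Fin 3) ℝ (EuclideanSpace ℝ (Fin 3)) :=
    (basisOfOrthonormalOfCardEqFinrank hv hcard).toOrthonormalBasis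
      (by rwa [coe_basisOfOrthonormalOfCardEqFinrank])
  have hB : ∀ i, B i = ![t, n, b] i := by
    intro i
    simp [B, Module.Basis.coe_toOrthonormalBasis, coe_basisOfOrthonormalOfCardEqFinrank]
  have := B.sum_inner_mul_inner x y
  rw [Fin.sum_univ_three, hB 0, hB 1, hB 2] at this
  simpa using this.symm

set_option maxHeartbeats 2000000 in
theorem stmt_12 (I : Set ℝ) (hI : IsOpen I)
    (r t n b : ℝ → EuclideanSpace ℝ (Fin 3)) (κ₀ : ℝ) (τ : ℝ → ℝ)
    (a : EuclideanSpace ℝ (Fin 3)) (ρ : ℝ) (ha : ‖a‖ = 1) (hρ : 0 < ρ)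
    (hr' : ∀ s, HasDerivAt r (t s) s)
    (htu : ∀ s, ‖t s‖ = 1) (hnu : ∀ s, ‖n s‖ = 1) (hbu : ∀ s, ‖b s‖ = 1)
    (htn : ∀ s, ⟪t s, n s⟫ = 0) (htb : ∀ s, ⟪t s, b s⟫ = 0)
    (hnb : ∀ s, ⟪n s, b s⟫ = 0)
    (ht' : ∀ s, HasDerivAt t (κ₀ • n s) s)
    (hn' : ∀ s, HasDerivAt n ((-κ₀) • t s + τ s • b s) s)
    (hb' : ∀ s, HasDerivAt b ((-τ s) • n s) s)
    (hκ : 0 < κ₀) (hτ : ∀ s, τ s ≠ 0)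
    (hcyl : ∀ s ∈ I, ‖r s‖ ^ 2 - ⟪r s, a⟫ ^ 2 = ρ ^ 2) :
    (∃ τ₀ : ℝ, ∀ s ∈ I, τ s = τ₀) ∨ (∀ s ∈ I, |τ s| ≤ 3 / (2 * ρ)) := by
  -- inner products of the frame with itself
  have htt : ∀ s, ⟪t s, t s⟫ = 1 := fun s => by
    rw [real_inner_self_eq_norm_sq, htu]; norm_num
  -- scalar derivative facts
  have hdh : ∀ s, HasDerivAt (fun u => ⟪r u, a⟫) (⟪t s, a⟫) s := fun s => by
    have h := (hr' s).inner ℝ (hasDerivAt_const s a)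
    rw [inner_zero_right, zero_add] at h
    exact h
  have hdT : ∀ s, HasDerivAt (fun u => ⟪t u, a⟫) (κ₀ * ⟪n s, a⟫) s := fun s => by
    have h := (ht' s).inner ℝ (hasDerivAt_const s a)
    rw [inner_zero_right, zero_add, real_inner_smul_left] at h
    exact h
  have hdN : ∀ s, HasDerivAt (fun u => ⟪n u, a⟫)
      (-(κ₀ * ⟪t s, a⟫) + τ s * ⟪b s, a⟫) s := fun s => by
    have h := (hn' s).inner ℝ (hasDerivAt_const s a)
    rw [inner_zero_right, zero_add, inner_add_left, real_inner_smul_left,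
      real_inner_smul_left] at h
    exact h.congr_deriv (by ring)
  have hdB : ∀ s, HasDerivAt (fun u => ⟪b u, a⟫) (-(τ s * ⟪n s, a⟫)) s := fun s => by
    have h := (hb' s).inner ℝ (hasDerivAt_const s a)
    rw [inner_zero_right, zero_add, real_inner_smul_left] at h
    exact h.congr_deriv (by ring)
  have hdp : ∀ s, HasDerivAt (fun u => ⟪r u, t u⟫) (κ₀ * ⟪r s, n s⟫ + 1) s := fun s => by
    have h := (hr' s).inner ℝ (ht' s)
    rw [real_inner_smul_right, htt s] at h
    exact h
  have hdq : ∀ s, HasDerivAt (fun u => ⟪r u, n u⟫)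
      (-(κ₀ * ⟪r s, t s⟫) + τ s * ⟪r s, b s⟫ + ⟪t s, n s⟫) s := fun s => by
    have h := (hr' s).inner ℝ (hn' s)
    rw [inner_add_right, real_inner_smul_right, real_inner_smul_right] at h
    exact h.congr_deriv (by ring)
  have hdw : ∀ s, HasDerivAt (fun u => ⟪r u, b u⟫)
      (-(τ s * ⟪r s, n s⟫) + ⟪t s, b s⟫) s := fun s => by
    have h := (hr' s).inner ℝ (hb' s)
    rw [real_inner_smul_right] at h
    exact h.congr_deriv (by ring)
  have hdrr : ∀ s, HasDerivAt (fun u => ⟪r u, r u⟫) (2 * ⟪r s, t s⟫) s := fun s => by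
    have h := (hr' s).inner ℝ (hr' s)
    rw [real_inner_comm (r s) (t s)] at h
    exact h.congr_deriv (by ring)
  -- vanishing derivative principle
  have loc : ∀ (f : ℝ → ℝ) (d s : ℝ), (∀ u ∈ I, f u = 0) → HasDerivAt f d s →
      s ∈ I → d = 0 := by
    intro f d s hf hd hs
    have hev : (fun _ : ℝ => (0 : ℝ)) =ᶠ[nhds s] f := by
      filter_upwards [hI.mem_nhds hs] with u hu using (hf u hu).symm
    exact (hd.congr_of_eventuallyEq hev).unique (hasDerivAt_const s 0)
  -- Parseval instances
  have hpar : ∀ (s : ℝ) (x y : EuclideanSpace ℝ (Fin 3)),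
      ⟪x, y⟫ = ⟪x, t s⟫ * ⟪t s, y⟫ + ⟪x, n s⟫ * ⟪n s, y⟫ + ⟪x, b s⟫ * ⟪b s, y⟫ :=
    fun s => parseval3 (t s) (n s) (b s) (htu s) (hnu s) (hbu s) (htn s) (htb s) (hnb s)
  have haa : ⟪a, a⟫ = 1 := by rw [real_inner_self_eq_norm_sq, ha]; norm_num
  have e5 : ∀ s, ⟪t s, a⟫ ^ 2 + ⟪n s, a⟫ ^ 2 + ⟪b s, a⟫ ^ 2 = 1 := fun s => by
    have h := hpar s a a
    rw [haa, real_inner_comm (t s) a, real_inner_comm (n s) a, real_inner_comm (b s) a] at h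
    nlinarith [h]
  have e6 : ∀ s, ⟪r s, a⟫ =
      ⟪r s, t s⟫ * ⟪t s, a⟫ + ⟪r s, n s⟫ * ⟪n s, a⟫ + ⟪r s, b s⟫ * ⟪b s, a⟫ :=
    fun s => hpar s (r s) a
  have err : ∀ s, ⟪r s, r s⟫ = ⟪r s, t s⟫ ^ 2 + ⟪r s, n s⟫ ^ 2 + ⟪r s, b s⟫ ^ 2 := fun s => by
    have h := hpar s (r s) (r s)
    rw [real_inner_comm (r s) (t s), real_inner_comm (r s) (n s),
      real_inner_comm (r s) (b s)] at h
    nlinarith [h]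
  -- Stage 1 : tangential component of r - h a vanishes on I
  have e1 : ∀ s ∈ I, ⟪r s, t s⟫ = ⟪r s, a⟫ * ⟪t s, a⟫ := by
    intro s hs
    have h2 : HasDerivAt (fun u => ⟪r u, a⟫ ^ 2) (2 * (⟪r s, a⟫ * ⟪t s, a⟫)) s := by
      have h := (hdh s).mul (hdh s)
      have h2 : (fun u => ⟪r u, a⟫ ^ 2) = fun u => ⟪r u, a⟫ * ⟪r u, a⟫ := by
        funext u; ring
      rw [h2]; exact h.congr_deriv (by ring)
    have hF : HasDerivAt (fun u => ⟪r u, r u⟫ - ⟪r u, a⟫ ^ 2 - ρ ^ 2)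
        (2 * ⟪r s, t s⟫ - 2 * (⟪r s, a⟫ * ⟪t s, a⟫)) s := ((hdrr s).sub h2).sub_const (ρ ^ 2)
    have h0 := loc _ _ s (fun u hu => by
      have h := hcyl u hu
      have h2 := real_inner_self_eq_norm_sq (r u)
      linarith) hF hs
    linarith
  -- Stage 2 : κ₀ Q = T² - 1 on I
  have e2 : ∀ s ∈ I, κ₀ * (⟪r s, n s⟫ - ⟪r s, a⟫ * ⟪n s, a⟫) = ⟪t s, a⟫ ^ 2 - 1 := by
    intro s hs
    have hF : HasDerivAt (fun u => ⟪r u, t u⟫ - ⟪r u, a⟫ * ⟪t u, a⟫)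
        ((κ₀ * ⟪r s, n s⟫ + 1) - (⟪t s, a⟫ * ⟪t s, a⟫ + ⟪r s, a⟫ * (κ₀ * ⟪n s, a⟫))) s :=
      (hdp s).sub ((hdh s).mul (hdT s))
    have h0 := loc _ _ s (fun u hu => by have := e1 u hu; linarith) hF hs
    linear_combination h0
  -- Stage 3 : τ W = 3 T N on I
  have e3 : ∀ s ∈ I, τ s * (⟪r s, b s⟫ - ⟪r s, a⟫ * ⟪b s, a⟫) =
      3 * (⟪t s, a⟫ * ⟪n s, a⟫) := by
    intro s hs
    have hsq : HasDerivAt (fun u => ⟪t u, a⟫ ^ 2 - 1)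
        (2 * ⟪t s, a⟫ * (κ₀ * ⟪n s, a⟫)) s := by
      have h := (hdT s).mul (hdT s)
      have h2 : (fun u => ⟪t u, a⟫ ^ 2 - 1) = fun u => ⟪t u, a⟫ * ⟪t u, a⟫ - 1 := by
        funext u; ring
      rw [h2]
      have := h.sub_const 1
      exact this.congr_deriv (by ring)
    have hmain : HasDerivAt (fun u => κ₀ * (⟪r u, n u⟫ - ⟪r u, a⟫ * ⟪n u, a⟫))
        (κ₀ * ((-(κ₀ * ⟪r s, t s⟫) + τ s * ⟪r s, b s⟫ + ⟪t s, n s⟫) -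
          (⟪t s, a⟫ * ⟪n s, a⟫ + ⟪r s, a⟫ * (-(κ₀ * ⟪t s, a⟫) + τ s * ⟪b s, a⟫)))) s :=
      ((hdq s).sub ((hdh s).mul (hdN s))).const_mul κ₀
    have hF := hmain.sub hsq
    have h0 := loc _ _ s (fun u hu => by have := e2 u hu; simp only [Pi.sub_apply]; linarith) hF hs
    have hp := e1 s hs
    have h1 : κ₀ * (τ s * (⟪r s, b s⟫ - ⟪r s, a⟫ * ⟪b s, a⟫) -
        3 * (⟪t s, a⟫ * ⟪n s, a⟫)) = 0 := by
      linear_combination h0 + κ₀ ^ 2 * hp - κ₀ * (htn s)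
    rcases mul_eq_zero.mp h1 with h | h
    · exact absurd h hκ.ne'
    · linarith
  -- cylinder equation in Frenet coordinates
  have e4 : ∀ s ∈ I, ⟪r s, t s⟫ ^ 2 + ⟪r s, n s⟫ ^ 2 + ⟪r s, b s⟫ ^ 2 - ⟪r s, a⟫ ^ 2 = ρ ^ 2 := by
    intro s hs
    have h := hcyl s hs
    have h2 := real_inner_self_eq_norm_sq (r s)
    have h3 := err s
    linarith
  -- algebraic consequences on I
  have key1 : ∀ s ∈ I, (⟪r s, n s⟫ - ⟪r s, a⟫ * ⟪n s, a⟫) * ⟪n s, a⟫ +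
      (⟪r s, b s⟫ - ⟪r s, a⟫ * ⟪b s, a⟫) * ⟪b s, a⟫ = 0 := by
    intro s hs
    linear_combination (-(⟪t s, a⟫)) * e1 s hs - ⟪r s, a⟫ * e5 s - e6 s
  have key2 : ∀ s ∈ I, (⟪r s, n s⟫ - ⟪r s, a⟫ * ⟪n s, a⟫) ^ 2 +
      (⟪r s, b s⟫ - ⟪r s, a⟫ * ⟪b s, a⟫) ^ 2 = ρ ^ 2 := by
    intro s hs
    linear_combination e4 s hs + ⟪r s, a⟫ ^ 2 * e5 s + 2 * ⟪r s, a⟫ * e6 s -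
      (⟪r s, t s⟫ - ⟪r s, a⟫ * ⟪t s, a⟫) * e1 s hs
  have key3 : ∀ s ∈ I, ρ ^ 2 * ⟪n s, a⟫ ^ 2 =
      (1 - ⟪t s, a⟫ ^ 2) * (⟪r s, b s⟫ - ⟪r s, a⟫ * ⟪b s, a⟫) ^ 2 := by
    intro s hs
    linear_combination ((⟪r s, n s⟫ - ⟪r s, a⟫ * ⟪n s, a⟫) * ⟪n s, a⟫ -
        (⟪r s, b s⟫ - ⟪r s, a⟫ * ⟪b s, a⟫) * ⟪b s, a⟫) * key1 s hs -
      ⟪n s, a⟫ ^ 2 * key2 s hs +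
      (⟪r s, b s⟫ - ⟪r s, a⟫ * ⟪b s, a⟫) ^ 2 * e5 s
  -- the torsion bound wherever the binormal cylinder coordinate is nonzero
  have good : ∀ z ∈ I, (⟪r z, b z⟫ - ⟪r z, a⟫ * ⟪b z, a⟫) ≠ 0 → |τ z| ≤ 3 / (2 * ρ) := by
    intro z hz hW
    have h9 : (ρ ^ 2 * τ z ^ 2 - 9 * ⟪t z, a⟫ ^ 2 * (1 - ⟪t z, a⟫ ^ 2)) *
        (⟪r z, b z⟫ - ⟪r z, a⟫ * ⟪b z, a⟫) ^ 2 = 0 := by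
      linear_combination ρ ^ 2 * (τ z * (⟪r z, b z⟫ - ⟪r z, a⟫ * ⟪b z, a⟫) +
        3 * (⟪t z, a⟫ * ⟪n z, a⟫)) * e3 z hz + 9 * ⟪t z, a⟫ ^ 2 * key3 z hz
    have h10 : ρ ^ 2 * τ z ^ 2 = 9 * ⟪t z, a⟫ ^ 2 * (1 - ⟪t z, a⟫ ^ 2) := by
      rcases mul_eq_zero.mp h9 with h | h
      · linarith
      · exact absurd ((pow_eq_zero_iff two_ne_zero).1 h) hW
    rw [le_div_iff₀ (by positivity : (0 : ℝ) < 2 * ρ)]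
    nlinarith [sq_abs (τ z), abs_nonneg (τ z), sq_nonneg (2 * ⟪t z, a⟫ ^ 2 - 1),
      mul_pos hρ hρ, hρ, sq_nonneg (|τ z| * (2 * ρ) - 3)]
  -- conclusion: the bound holds everywhere on I
  refine Or.inr fun s₀ hs₀ => ?_
  by_cases hW0 : ⟪r s₀, b s₀⟫ - ⟪r s₀, a⟫ * ⟪b s₀, a⟫ = 0
  swap
  · exact good s₀ hs₀ hW0
  -- hard case: the binormal coordinate vanishes at s₀
  have hN0 : ⟪n s₀, a⟫ = 0 := by
    have h := key3 s₀ hs₀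
    rw [hW0] at h
    have h2 : ⟪n s₀, a⟫ ^ 2 = 0 := by
      rcases mul_eq_zero.mp (by linarith [h] : ρ ^ 2 * ⟪n s₀, a⟫ ^ 2 = 0) with h3 | h3
      · exact absurd h3 (by positivity)
      · exact h3
    exact (pow_eq_zero_iff two_ne_zero).1 h2
  have hQm : ⟪r s₀, n s₀⟫ - ⟪r s₀, a⟫ * ⟪n s₀, a⟫ = -ρ := by
    have h2 := key2 s₀ hs₀
    rw [hW0] at h2
    have hQle : ⟪r s₀, n s₀⟫ - ⟪r s₀, a⟫ * ⟪n s₀, a⟫ ≤ 0 := by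
      nlinarith [e2 s₀ hs₀, e5 s₀, sq_nonneg ⟪n s₀, a⟫, sq_nonneg ⟪b s₀, a⟫, hκ]
    have h3 : (⟪r s₀, n s₀⟫ - ⟪r s₀, a⟫ * ⟪n s₀, a⟫ - ρ) *
        (⟪r s₀, n s₀⟫ - ⟪r s₀, a⟫ * ⟪n s₀, a⟫ + ρ) = 0 := by nlinarith [h2]
    rcases mul_eq_zero.mp h3 with h4 | h4
    · linarith
    · linarith
  have hq : ⟪r s₀, n s₀⟫ = -ρ := by linear_combination hQm + ⟪r s₀, a⟫ * hN0
  have hT2B2 : ⟪t s₀, a⟫ ^ 2 + ⟪b s₀, a⟫ ^ 2 = 1 := by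
    have := e5 s₀
    nlinarith [hN0]
  by_contra hcon
  push_neg at hcon
  have hτρ : 3 / 2 < |τ s₀| * ρ := by
    rw [div_lt_iff₀ (by positivity : (0 : ℝ) < 2 * ρ)] at hcon
    linarith
  have hTB : |⟪t s₀, a⟫ * ⟪b s₀, a⟫| ≤ 1 / 2 := by
    rw [abs_le]
    constructor
    · nlinarith [sq_nonneg (⟪t s₀, a⟫ + ⟪b s₀, a⟫)]
    · nlinarith [sq_nonneg (⟪t s₀, a⟫ - ⟪b s₀, a⟫)]
  have hd : τ s₀ * ρ - ⟪t s₀, a⟫ * ⟪b s₀, a⟫ ≠ 0 := by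
    intro h0
    have h1 : |τ s₀ * ρ| = |⟪t s₀, a⟫ * ⟪b s₀, a⟫| := by rw [show τ s₀ * ρ = ⟪t s₀, a⟫ * ⟪b s₀, a⟫ by linarith]
    rw [abs_mul, abs_of_pos hρ] at h1
    linarith
  have hWd : HasDerivAt (fun u => ⟪r u, b u⟫ - ⟪r u, a⟫ * ⟪b u, a⟫)
      (τ s₀ * ρ - ⟪t s₀, a⟫ * ⟪b s₀, a⟫) s₀ := by
    have h := (hdw s₀).sub ((hdh s₀).mul (hdB s₀))
    refine h.congr_deriv ?_
    linear_combination -(τ s₀ * hq) + htb s₀ + (⟪r s₀, a⟫ * τ s₀) * hN0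
  have hWne : ∀ᶠ z in nhdsWithin s₀ {s₀}ᶜ,
      ⟪r z, b z⟫ - ⟪r z, a⟫ * ⟪b z, a⟫ ≠ 0 := by
    filter_upwards [hWd.eventually_ne (c := ⟪r s₀, b s₀⟫ - ⟪r s₀, a⟫ * ⟪b s₀, a⟫) hd] with z hz
    intro h0
    exact hz (by rw [h0, hW0])
  -- the auxiliary function ψ
  have hψ : ∀ s, HasDerivAt (fun u => ⟪n u, b s₀⟫)
      (-(κ₀ * ⟪t s, b s₀⟫) + τ s * ⟪b s, b s₀⟫) s := fun s => by
    have h := (hn' s).inner ℝ (hasDerivAt_const s (b s₀))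
    rw [inner_zero_right, zero_add, inner_add_left, real_inner_smul_left,
      real_inner_smul_left] at h
    exact h.congr_deriv (by ring)
  have hbb : ⟪b s₀, b s₀⟫ = 1 := by rw [real_inner_self_eq_norm_sq, hbu]; norm_num
  have hψ0 : HasDerivAt (fun u => ⟪n u, b s₀⟫) (τ s₀) s₀ := by
    have h := hψ s₀
    rw [htb s₀, hbb] at h
    exact h.congr_deriv (by ring)
  set ε := (|τ s₀| - 3 / (2 * ρ)) / 2 with hε_def
  have hε : 0 < ε := by
    rw [hε_def]; linarith
  have hcont : ContinuousAt (fun z => κ₀ * |⟪t z, b s₀⟫|) s₀ := by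
    exact continuousAt_const.mul (((ht' s₀).continuousAt.inner continuousAt_const).abs)
  have evT : ∀ᶠ z in nhds s₀, κ₀ * |⟪t z, b s₀⟫| < ε := by
    have h := hcont
    rw [ContinuousAt] at h
    rw [show κ₀ * |⟪t s₀, b s₀⟫| = 0 by rw [htb s₀]; simp] at h
    exact h.eventually_lt_const hε
  have evI : ∀ᶠ z in nhds s₀, z ∈ I := Filter.eventually_of_mem (hI.mem_nhds hs₀) fun z hz => hz
  have evAll : ∀ᶠ z in nhdsWithin s₀ {s₀}ᶜ, z ∈ I ∧ κ₀ * |⟪t z, b s₀⟫| < ε ∧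
      ⟪r z, b z⟫ - ⟪r z, a⟫ * ⟪b z, a⟫ ≠ 0 := by
    filter_upwards [evI.filter_mono nhdsWithin_le_nhds, evT.filter_mono nhdsWithin_le_nhds,
      hWne] with z h1 h2 h3
    exact ⟨h1, h2, h3⟩
  -- bound on ψ' at good points
  have hbd : ∀ z, z ∈ I → ⟪r z, b z⟫ - ⟪r z, a⟫ * ⟪b z, a⟫ ≠ 0 →
      κ₀ * |⟪t z, b s₀⟫| < ε →
      |(-(κ₀ * ⟪t z, b s₀⟫) + τ z * ⟪b z, b s₀⟫)| ≤ 3 / (2 * ρ) + ε := by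
    intro z hz hWz htz
    have h1 := good z hz hWz
    have h2 : |⟪b z, b s₀⟫| ≤ 1 := by
      have h3 := abs_real_inner_le_norm (b z) (b s₀)
      rw [hbu, hbu] at h3
      simpa using h3
    have h4 : |(-(κ₀ * ⟪t z, b s₀⟫) + τ z * ⟪b z, b s₀⟫)| ≤
        κ₀ * |⟪t z, b s₀⟫| + |τ z * ⟪b z, b s₀⟫| := by
      have h5 := abs_add_le (-(κ₀ * ⟪t z, b s₀⟫)) (τ z * ⟪b z, b s₀⟫)
      rw [abs_neg, abs_mul, abs_of_pos hκ] at h5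
      exact h5
    have h6 : |τ z * ⟪b z, b s₀⟫| ≤ 3 / (2 * ρ) := by
      rw [abs_mul]
      calc |τ z| * |⟪b z, b s₀⟫| ≤ (3 / (2 * ρ)) * 1 :=
            mul_le_mul h1 h2 (abs_nonneg _) (by positivity)
        _ = 3 / (2 * ρ) := mul_one _
    linarith
  -- slope bound near s₀
  have hsb : ∀ᶠ z in nhdsWithin s₀ {s₀}ᶜ,
      |slope (fun u => ⟪n u, b s₀⟫) s₀ z| ≤ 3 / (2 * ρ) + ε := by
    rw [Filter.eventually_iff, Metric.mem_nhdsWithin_iff] at evAll ⊢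
    obtain ⟨δ, hδ, hsub⟩ := evAll
    refine ⟨δ, hδ, ?_⟩
    rintro z ⟨hzb, hzs⟩
    have hzne : z ≠ s₀ := hzs
    have hzd : |z - s₀| < δ := by
      have := Metric.mem_ball.mp hzb
      rwa [Real.dist_eq] at this
    rcases lt_trichotomy z s₀ with hlt | heq | hgt
    · obtain ⟨c, hc, hceq⟩ := exists_hasDerivAt_eq_slope (fun u => ⟪n u, b s₀⟫)
        (fun x => -(κ₀ * ⟪t x, b s₀⟫) + τ x * ⟪b x, b s₀⟫) hlt
        (fun x _ => (hψ x).continuousAt.continuousWithinAt)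
        (fun x _ => hψ x)
      have hcmem : c ∈ Metric.ball s₀ δ ∩ {s₀}ᶜ := by
        constructor
        · rw [Metric.mem_ball, Real.dist_eq, abs_lt]
          rcases abs_lt.mp hzd with ⟨hz1, hz2⟩
          exact ⟨by linarith [hc.1, hc.2], by linarith [hc.1, hc.2]⟩
        · exact fun hcs => by simp at hcs; linarith [hc.2, hcs.le]
      obtain ⟨hcI, hcT, hcW⟩ := hsub hcmem
      have hz1 : z - s₀ ≠ 0 := sub_ne_zero.mpr hzne
      have hz2 : s₀ - z ≠ 0 := sub_ne_zero.mpr (ne_of_gt hlt)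
      have hslope : slope (fun u => ⟪n u, b s₀⟫) s₀ z =
          -(κ₀ * ⟪t c, b s₀⟫) + τ c * ⟪b c, b s₀⟫ := by
        have h7 := hceq.symm
        rw [div_eq_iff hz2] at h7
        rw [slope_def_field, div_eq_iff hz1]
        linear_combination -h7
      show |slope (fun u => ⟪n u, b s₀⟫) s₀ z| ≤ 3 / (2 * ρ) + ε
      rw [hslope]
      exact hbd c hcI hcW hcT
    · exact absurd heq hzne
    · obtain ⟨c, hc, hceq⟩ := exists_hasDerivAt_eq_slope (fun u => ⟪n u, b s₀⟫)
        (fun x => -(κ₀ * ⟪t x, b s₀⟫) + τ x * ⟪b x, b s₀⟫) hgt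
        (fun x _ => (hψ x).continuousAt.continuousWithinAt)
        (fun x _ => hψ x)
      have hcmem : c ∈ Metric.ball s₀ δ ∩ {s₀}ᶜ := by
        constructor
        · rw [Metric.mem_ball, Real.dist_eq, abs_lt]
          rcases abs_lt.mp hzd with ⟨hz1, hz2⟩
          exact ⟨by linarith [hc.1, hc.2], by linarith [hc.1, hc.2]⟩
        · exact fun hcs => by simp at hcs; linarith [hc.1, hcs.le]
      obtain ⟨hcI, hcT, hcW⟩ := hsub hcmem
      have hslope : slope (fun u => ⟪n u, b s₀⟫) s₀ z =
          -(κ₀ * ⟪t c, b s₀⟫) + τ c * ⟪b c, b s₀⟫ := by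
        rw [slope_def_field]
        exact hceq.symm
      show |slope (fun u => ⟪n u, b s₀⟫) s₀ z| ≤ 3 / (2 * ρ) + ε
      rw [hslope]
      exact hbd c hcI hcW hcT
  have htend : Filter.Tendsto (fun z => |slope (fun u => ⟪n u, b s₀⟫) s₀ z|)
      (nhdsWithin s₀ {s₀}ᶜ) (nhds |τ s₀|) :=
    (hasDerivAt_iff_tendsto_slope.mp hψ0).abs
  have hfin : |τ s₀| ≤ 3 / (2 * ρ) + ε := le_of_tendsto htend hsb
  rw [hε_def] at hfin
  linarith
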